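/- Let n, t, ℓ be integers with t ≥ 0, n > 2t, and t + 1 ≤ ℓ ≤ n − 1 − t, and let a_1, …, a_t, b_1, …, b_t be pairwise distinct elements of [n−1]. Writing ṽ = v/‖v‖ for the Euclidean normalization, one has for every A ⊆ [n]: if n ∉ A then ṽ_ℓ^n(t,a,b)(A) = √((n−ℓ−t)/(n−2t)) · ṽ_ℓ^{n−1}(t,a,b)(A), and if n ∈ A then ṽ_ℓ^n(t,a,b)(A) = √((ℓ−t)/(n−2t)) · ṽ_{ℓ−1}^{n−1}(t,a,b)(A∖{n}), where on the right-hand sides A and A∖{n} are viewed as subsets of [n−1]. -/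

import Mathlib

/-- The vector `v_ℓ^n(t,a,b)` on subsets of `[n]`. -/
noncomputable def specV (n t : ℕ) (a b : Fin t → Fin n) (ℓ : ℕ) (A : Finset (Fin n)) : ℝ :=
  if A.card = ℓ then
    ∏ i : Fin t,
      (if a i ∈ A ∧ b i ∉ A then (1:ℝ) else if b i ∈ A ∧ a i ∉ A then (-1:ℝ) else 0)
  else 0

/-- The Euclidean normalization `ṽ = v/‖v‖` of `v_ℓ^n(t,a,b)`. -/
noncomputable def tildeV (n t : ℕ) (a b : Fin t → Fin n) (ℓ : ℕ) (A : Finset (Fin n)) : ℝ :=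
  specV n t a b ℓ A / Real.sqrt (∑ B : Finset (Fin n), (specV n t a b ℓ B)^2)

/-- The "good" predicate: `B` has exactly one element from each pair. -/
def specGood {n t : ℕ} (a b : Fin t → Fin n) (B : Finset (Fin n)) : Prop :=
  ∀ i, (a i ∈ B ∧ b i ∉ B) ∨ (b i ∈ B ∧ a i ∉ B)

instance {n t : ℕ} (a b : Fin t → Fin n) (B : Finset (Fin n)) :
    Decidable (specGood a b B) :=
  inferInstanceAs (Decidable (∀ i, (a i ∈ B ∧ b i ∉ B) ∨ (b i ∈ B ∧ a i ∉ B)))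

lemma specV_sq {n t : ℕ} (a b : Fin t → Fin n) (ℓ : ℕ) (B : Finset (Fin n)) :
    (specV n t a b ℓ B)^2 = if B.card = ℓ ∧ specGood a b B then (1:ℝ) else 0 := by
  unfold specV specGood
  by_cases hc : B.card = ℓ
  · simp only [hc, if_true, true_and]
    rw [← Finset.prod_pow]
    have : ∀ i : Fin t,
        (if a i ∈ B ∧ b i ∉ B then (1:ℝ) else if b i ∈ B ∧ a i ∉ B then (-1:ℝ) else 0)^2
        = if (a i ∈ B ∧ b i ∉ B) ∨ (b i ∈ B ∧ a i ∉ B) then (1:ℝ) else 0 := by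
      intro i; split_ifs <;> norm_num <;> tauto
    rw [Finset.prod_congr rfl (fun i _ => this i), Fintype.prod_boole]
    split_ifs <;> rfl
  · simp [hc]

/-- Counting the good sets of size `ℓ`. -/
lemma count_good (n t ℓ : ℕ) (a b : Fin t → Fin n)
    (hinj : Function.Injective (Sum.elim a b)) (ht : t ≤ ℓ) :
    ((Finset.univ : Finset (Finset (Fin n))).filter
        (fun B => B.card = ℓ ∧ specGood a b B)).card
      = 2^t * (n - 2*t).choose (ℓ - t) := by
  classical
  have ha : ∀ {i j}, a i = a j → i = j := by
    intro i j h
    have := hinj (a₁ := Sum.inl i) (a₂ := Sum.inl j) (by simpa using h)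
    simpa using this
  have hb : ∀ {i j}, b i = b j → i = j := by
    intro i j h
    have := hinj (a₁ := Sum.inr i) (a₂ := Sum.inr j) (by simpa using h)
    simpa using this
  have hab : ∀ i j, a i ≠ b j := by
    intro i j h
    have := hinj (a₁ := Sum.inl i) (a₂ := Sum.inr j) (by simpa using h)
    simp at this
  set P : Finset (Fin n) := (Finset.univ : Finset (Fin t ⊕ Fin t)).image (Sum.elim a b) with hP
  have hmemP : ∀ x, x ∈ P ↔ (∃ i, a i = x) ∨ (∃ i, b i = x) := by
    intro x
    simp only [hP, Finset.mem_image, Finset.mem_univ, true_and]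
    constructor
    · rintro ⟨(i | i), rfl⟩
      · exact Or.inl ⟨i, rfl⟩
      · exact Or.inr ⟨i, rfl⟩
    · rintro (⟨i, rfl⟩ | ⟨i, rfl⟩)
      · exact ⟨Sum.inl i, rfl⟩
      · exact ⟨Sum.inr i, rfl⟩
  have haP : ∀ i, a i ∈ P := fun i => (hmemP _).2 (Or.inl ⟨i, rfl⟩)
  have hbP : ∀ i, b i ∈ P := fun i => (hmemP _).2 (Or.inr ⟨i, rfl⟩)
  have hPcard : P.card = 2 * t := by
    rw [hP, Finset.card_image_of_injective _ hinj, Finset.card_univ]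
    simp [two_mul]
  -- injectivity of choosers
  have hchoose_inj : ∀ f : Fin t → Bool,
      Function.Injective (fun i => if f i then a i else b i) := by
    intro f i j h
    dsimp only at h
    by_cases hi : f i <;> by_cases hj : f j <;> simp [hi, hj] at h
    · exact ha h
    · exact absurd h (hab i j)
    · exact absurd h.symm (hab j i)
    · exact hb h
  -- the source finset
  have key := Finset.card_nbij'
    (s := (Finset.univ : Finset (Fin t → Bool)) ×ˢ
      ((Finset.univ \ P).powersetCard (ℓ - t)))
    (t := (Finset.univ : Finset (Finset (Fin n))).filter
        (fun B => B.card = ℓ ∧ specGood a b B))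
    (i := fun p => p.2 ∪ Finset.image (fun i => if p.1 i then a i else b i) Finset.univ)
    (j := fun B => (fun i => decide (a i ∈ B), B \ P))
    ?_ ?_ ?_ ?_
  · rw [← key, Finset.card_product, Finset.card_powersetCard,
      Finset.card_sdiff_of_subset (Finset.subset_univ _), Finset.card_univ, Finset.card_univ,
      hPcard, Fintype.card_fin]
    congr 1
    simp [Fintype.card_fun]
  -- hi
  · rintro ⟨f, C⟩ hp
    simp only [Finset.mem_coe, Finset.mem_product, Finset.mem_powersetCard] at hp
    obtain ⟨-, hCsub, hCcard⟩ := hp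
    have hCP : Disjoint C P := by
      refine Finset.disjoint_left.2 fun x hx hxP => ?_
      have := hCsub hx
      simp only [Finset.mem_sdiff] at this
      exact this.2 hxP
    have himg_sub : Finset.image (fun i => if f i then a i else b i) Finset.univ ⊆ P := by
      intro x hx
      simp only [Finset.mem_image] at hx
      obtain ⟨i, -, rfl⟩ := hx
      by_cases hfi : f i <;> simp [hfi, haP, hbP]
    have hmem_a : ∀ k, a k ∈ C ∪ Finset.image (fun i => if f i then a i else b i) Finset.univ
        ↔ f k = true := by
      intro k
      simp only [Finset.mem_union, Finset.mem_image, Finset.mem_univ, true_and]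
      constructor
      · rintro (h | ⟨i, hi⟩)
        · exact absurd (haP k) (Finset.disjoint_left.1 hCP h)
        · by_cases hfi : f i
          · simp only [hfi, if_true] at hi
            rw [ha hi] at hfi; exact hfi
          · simp only [hfi, if_false] at hi
            exact absurd hi.symm (hab k i)
      · intro hk; exact Or.inr ⟨k, by simp [hk]⟩
    have hmem_b : ∀ k, b k ∈ C ∪ Finset.image (fun i => if f i then a i else b i) Finset.univ
        ↔ f k = false := by
      intro k
      simp only [Finset.mem_union, Finset.mem_image, Finset.mem_univ, true_and]
      constructor
      · rintro (h | ⟨i, hi⟩)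
        · exact absurd (hbP k) (Finset.disjoint_left.1 hCP h)
        · by_cases hfi : f i
          · simp only [hfi, if_true] at hi
            exact absurd hi (hab i k)
          · simp only [hfi, if_false] at hi
            rw [hb hi] at hfi; simpa using hfi
      · intro hk; exact Or.inr ⟨k, by simp [hk]⟩
    simp only [Finset.mem_coe, Finset.mem_filter, Finset.mem_univ, true_and]
    constructor
    · rw [Finset.card_union_of_disjoint (Finset.disjoint_of_subset_right himg_sub hCP),
        hCcard, Finset.card_image_of_injective _ (hchoose_inj f), Finset.card_univ,
        Fintype.card_fin]
      omega
    · intro k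
      by_cases hfk : f k
      · exact Or.inl ⟨(hmem_a k).2 hfk, fun h => by simp [(hmem_b k).1 h] at hfk⟩
      · refine Or.inr ⟨(hmem_b k).2 (by simpa using hfk), fun h => hfk ((hmem_a k).1 h)⟩
  -- hj
  · intro B hB
    simp only [Finset.mem_coe, Finset.mem_filter, Finset.mem_univ, true_and] at hB
    obtain ⟨hBcard, hgood⟩ := hB
    have hinter : B ∩ P = Finset.image
        (fun i => if decide (a i ∈ B) = true then a i else b i) Finset.univ := by
      ext x
      simp only [Finset.mem_inter, Finset.mem_image, Finset.mem_univ, true_and,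
        decide_eq_true_eq]
      constructor
      · rintro ⟨hxB, hxP⟩
        rcases (hmemP x).1 hxP with ⟨i, rfl⟩ | ⟨i, rfl⟩
        · exact ⟨i, by simp [hxB]⟩
        · refine ⟨i, ?_⟩
          rcases hgood i with ⟨haB, hbB⟩ | ⟨hbB, haB⟩
          · exact absurd hxB hbB
          · simp [haB]
      · rintro ⟨i, rfl⟩
        rcases hgood i with ⟨haB, hbB⟩ | ⟨hbB, haB⟩
        · exact ⟨by simp [haB], by simp [haB, haP]⟩
        · exact ⟨by simp [haB, hbB], by simp [haB, hbP]⟩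
    have hinter_card : (B ∩ P).card = t := by
      rw [hinter, Finset.card_image_of_injective _ (hchoose_inj (fun i => decide (a i ∈ B))),
        Finset.card_univ, Fintype.card_fin]
    simp only [Finset.mem_coe, Finset.mem_product, Finset.mem_univ, true_and, Finset.mem_powersetCard]
    refine ⟨fun x hx => ?_, ?_⟩
    · simp only [Finset.mem_sdiff] at hx ⊢
      exact ⟨Finset.mem_univ _, hx.2⟩
    · have := Finset.card_inter_add_card_sdiff B P
      omega
  -- left_inv
  · rintro ⟨f, C⟩ hp
    simp only [Finset.mem_coe, Finset.mem_product, Finset.mem_powersetCard] at hp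
    obtain ⟨-, hCsub, -⟩ := hp
    have hCP : Disjoint C P := by
      refine Finset.disjoint_left.2 fun x hx hxP => ?_
      have := hCsub hx
      simp only [Finset.mem_sdiff] at this
      exact this.2 hxP
    have himg_sub : Finset.image (fun i => if f i then a i else b i) Finset.univ ⊆ P := by
      intro x hx
      simp only [Finset.mem_image] at hx
      obtain ⟨i, -, rfl⟩ := hx
      by_cases hfi : f i <;> simp [hfi, haP, hbP]
    refine Prod.ext ?_ ?_
    · funext k
      simp only
      by_cases hfk : f k
      · rw [hfk]
        rw [decide_eq_true_eq]
        exact Finset.mem_union_right _ (Finset.mem_image.2 ⟨k, Finset.mem_univ _, by simp [hfk]⟩)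
      · simp only [Bool.not_eq_true] at hfk
        rw [hfk, decide_eq_false_iff_not]
        intro h
        rcases Finset.mem_union.1 h with h | h
        · exact (Finset.disjoint_left.1 hCP h) (haP k)
        · simp only [Finset.mem_image, Finset.mem_univ, true_and] at h
          obtain ⟨i, hi⟩ := h
          by_cases hfi : f i
          · simp only [hfi, if_true] at hi
            rw [ha hi] at hfi
            rw [hfk] at hfi; exact Bool.noConfusion hfi
          · simp only [hfi, if_false] at hi
            exact (hab k i) hi.symm
    · simp only
      rw [Finset.union_sdiff_distrib,
        Finset.sdiff_eq_self_of_disjoint hCP,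
        Finset.sdiff_eq_empty_iff_subset.2 himg_sub, Finset.union_empty]
  -- right_inv
  · intro B hB
    simp only [Finset.mem_coe, Finset.mem_filter, Finset.mem_univ, true_and] at hB
    obtain ⟨-, hgood⟩ := hB
    have hinter : B ∩ P = Finset.image
        (fun i => if (fun j => decide (a j ∈ B)) i then a i else b i) Finset.univ := by
      ext x
      simp only [Finset.mem_inter, Finset.mem_image, Finset.mem_univ, true_and,
        decide_eq_true_eq]
      constructor
      · rintro ⟨hxB, hxP⟩
        rcases (hmemP x).1 hxP with ⟨i, rfl⟩ | ⟨i, rfl⟩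
        · exact ⟨i, by simp [hxB]⟩
        · refine ⟨i, ?_⟩
          rcases hgood i with ⟨haB, hbB⟩ | ⟨hbB, haB⟩
          · exact absurd hxB hbB
          · simp [haB]
      · rintro ⟨i, rfl⟩
        rcases hgood i with ⟨haB, hbB⟩ | ⟨hbB, haB⟩
        · exact ⟨by simp [haB], by simp [haB, haP]⟩
        · exact ⟨by simp [haB, hbB], by simp [haB, hbP]⟩
    simp only
    rw [← hinter, Finset.sdiff_union_inter]

/-- The squared norm of `specV`. -/
lemma norm_sq (n t ℓ : ℕ) (a b : Fin t → Fin n)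
    (hinj : Function.Injective (Sum.elim a b)) (ht : t ≤ ℓ) :
    ∑ B : Finset (Fin n), (specV n t a b ℓ B)^2
      = (2^t * (n - 2*t).choose (ℓ - t) : ℕ) := by
  classical
  simp only [specV_sq]
  rw [Finset.sum_boole, count_good n t ℓ a b hinj ht]

lemma filter_card_not_mem {n : ℕ} (A : Finset (Fin (n + 1))) (hA : Fin.last n ∉ A) :
    (Finset.univ.filter (fun i : Fin n => i.castSucc ∈ A)).card = A.card := by
  have himg : (Finset.univ.filter (fun i : Fin n => i.castSucc ∈ A)).image Fin.castSucc = A := by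
    ext x
    simp only [Finset.mem_image, Finset.mem_filter, Finset.mem_univ, true_and]
    constructor
    · rintro ⟨y, hy, rfl⟩; exact hy
    · intro hx
      have hxne : x ≠ Fin.last n := fun h => hA (h ▸ hx)
      exact ⟨x.castPred hxne, by rwa [Fin.castSucc_castPred], Fin.castSucc_castPred _ _⟩
  have h2 := Finset.card_image_of_injective
    (Finset.univ.filter (fun i : Fin n => i.castSucc ∈ A)) (Fin.castSucc_injective n)
  rw [himg] at h2
  exact h2.symm

lemma filter_card_mem {n : ℕ} (A : Finset (Fin (n + 1))) (hA : Fin.last n ∈ A) :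
    (Finset.univ.filter (fun i : Fin n => i.castSucc ∈ A)).card + 1 = A.card := by
  have himg : (Finset.univ.filter (fun i : Fin n => i.castSucc ∈ A)).image Fin.castSucc
      = A.erase (Fin.last n) := by
    ext x
    simp only [Finset.mem_image, Finset.mem_filter, Finset.mem_univ, true_and,
      Finset.mem_erase]
    constructor
    · rintro ⟨y, hy, rfl⟩
      exact ⟨fun h => Fin.castSucc_lt_last y |>.ne h, hy⟩
    · rintro ⟨hxne, hx⟩
      exact ⟨x.castPred hxne, by rwa [Fin.castSucc_castPred], Fin.castSucc_castPred _ _⟩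
  have := Finset.card_erase_add_one hA
  have h2 := Finset.card_image_of_injective
    (Finset.univ.filter (fun i : Fin n => i.castSucc ∈ A)) (Fin.castSucc_injective n)
  rw [himg] at h2
  omega

lemma specV_castSucc_not_mem {n t ℓ : ℕ} (a b : Fin t → Fin n)
    (A : Finset (Fin (n + 1))) (hA : Fin.last n ∉ A) :
    specV (n+1) t (fun i => (a i).castSucc) (fun i => (b i).castSucc) ℓ A
      = specV n t a b ℓ (Finset.univ.filter (fun i : Fin n => i.castSucc ∈ A)) := by
  unfold specV
  rw [filter_card_not_mem A hA]
  by_cases hc : A.card = ℓ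
  · simp only [hc, if_true]
    refine Finset.prod_congr rfl fun i _ => ?_
    simp [Finset.mem_filter]
  · simp [hc]

lemma specV_castSucc_mem {n t ℓ : ℕ} (a b : Fin t → Fin n) (hℓ : 1 ≤ ℓ)
    (A : Finset (Fin (n + 1))) (hA : Fin.last n ∈ A) :
    specV (n+1) t (fun i => (a i).castSucc) (fun i => (b i).castSucc) ℓ A
      = specV n t a b (ℓ - 1) (Finset.univ.filter (fun i : Fin n => i.castSucc ∈ A)) := by
  unfold specV
  have hcard := filter_card_mem A hA
  have hiff : A.card = ℓ ↔
      (Finset.univ.filter (fun i : Fin n => i.castSucc ∈ A)).card = ℓ - 1 := by omega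
  by_cases hc : A.card = ℓ
  · simp only [hc, if_true, hiff.1 hc, if_true]
    refine Finset.prod_congr rfl fun i _ => ?_
    simp [Finset.mem_filter]
  · rw [if_neg hc, if_neg (fun h => hc (hiff.2 h))]

lemma div_sqrt_helper (x S₀ S₁ : ℝ) (h0 : 0 < S₀) (h1 : 0 < S₁) :
    x / Real.sqrt S₁ = Real.sqrt (S₀ / S₁) * (x / Real.sqrt S₀) := by
  rw [Real.sqrt_div h0.le]
  have hs0 : Real.sqrt S₀ ≠ 0 := ne_of_gt (Real.sqrt_pos.2 h0)
  have hs1 : Real.sqrt S₁ ≠ 0 := ne_of_gt (Real.sqrt_pos.2 h1)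
  field_simp

/- Here the paper's `n` is the Lean variable `n + 1` (the hypothesis `n > 2t ≥ 0` forces
`n ≥ 1`), so `[n-1]` is `Fin n` and `[n]` is `Fin (n+1)`, with the element `n` being
`Fin.last n`; a subset `A ⊆ [n]` corresponds, after removing `n`, to the subset
`{i ∈ [n-1] : i ∈ A}` of `[n-1]`. -/
set_option maxHeartbeats 1000000 in
theorem stmt11 (n t ℓ : ℕ) (hn : 2 * t < n + 1) (hℓ1 : t + 1 ≤ ℓ) (hℓ2 : ℓ ≤ n - t)
    (a b : Fin t → Fin n) (hinj : Function.Injective (Sum.elim a b))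
    (A : Finset (Fin (n + 1))) :
    (Fin.last n ∉ A →
      tildeV (n+1) t (fun i => (a i).castSucc) (fun i => (b i).castSucc) ℓ A
        = Real.sqrt (((n:ℝ) + 1 - ℓ - t) / ((n:ℝ) + 1 - 2*t))
            * tildeV n t a b ℓ (Finset.univ.filter (fun i : Fin n => i.castSucc ∈ A))) ∧
    (Fin.last n ∈ A →
      tildeV (n+1) t (fun i => (a i).castSucc) (fun i => (b i).castSucc) ℓ A
        = Real.sqrt (((ℓ:ℝ) - t) / ((n:ℝ) + 1 - 2*t))
            * tildeV n t a b (ℓ - 1)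
                (Finset.univ.filter (fun i : Fin n => i.castSucc ∈ A))) := by
  have ht : 2 * t ≤ n := by omega
  have htℓ : t ≤ ℓ := by omega
  have hℓn : ℓ + t ≤ n := by omega
  -- injectivity of the castSucc'ed families
  have hinj' : Function.Injective
      (Sum.elim (fun i => (a i).castSucc) (fun i => (b i).castSucc) : Fin t ⊕ Fin t → Fin (n+1)) := by
    intro x y h
    apply hinj
    rcases x with x | x <;> rcases y with y | y <;>
      simp only [Sum.elim_inl, Sum.elim_inr] at h ⊢ <;>
      exact Fin.castSucc_injective n h
  set m : ℕ := n - 2 * t with hm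
  set k : ℕ := ℓ - t with hk
  have hkm : k ≤ m := by omega
  have hk1 : 1 ≤ k := by omega
  -- the three squared norms
  have hS1 : ∑ B : Finset (Fin (n+1)),
      (specV (n+1) t (fun i => (a i).castSucc) (fun i => (b i).castSucc) ℓ B)^2
      = ((2^t * (m+1).choose k : ℕ) : ℝ) := by
    rw [norm_sq (n+1) t ℓ _ _ hinj' htℓ, show n + 1 - 2*t = m + 1 by omega, ← hk]
  have hS0 : ∑ B : Finset (Fin n), (specV n t a b ℓ B)^2
      = ((2^t * m.choose k : ℕ) : ℝ) := by
    rw [norm_sq n t ℓ a b hinj htℓ, ← hm, ← hk]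
  have hS0' : ∑ B : Finset (Fin n), (specV n t a b (ℓ-1) B)^2
      = ((2^t * m.choose (k-1) : ℕ) : ℝ) := by
    rw [norm_sq n t (ℓ-1) a b hinj (by omega), ← hm, show ℓ - 1 - t = k - 1 by omega]
  have h2t : (0:ℝ) < (2:ℝ)^t := by positivity
  have hC1 : 0 < (m+1).choose k := Nat.choose_pos (by omega)
  have hC0 : 0 < m.choose k := Nat.choose_pos hkm
  have hC0' : 0 < m.choose (k-1) := Nat.choose_pos (by omega)
  constructor
  · intro hA
    unfold tildeV
    rw [hS1, hS0, specV_castSucc_not_mem a b A hA]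
    rw [div_sqrt_helper _ ((2^t * m.choose k : ℕ) : ℝ) ((2^t * (m+1).choose k : ℕ) : ℝ)
      (by positivity) (by positivity)]
    have hch := Nat.choose_mul_succ_eq m k
    have hcast : ((m.choose k : ℝ)) * ((m:ℝ) + 1) = ((m+1).choose k : ℝ) * ((m:ℝ) + 1 - k) := by
      have : ((m + 1 - k : ℕ) : ℝ) = (m:ℝ) + 1 - k := by
        rw [Nat.cast_sub (by omega)]; push_cast; ring
      rw [← this]
      exact_mod_cast hch
    have hnum : (n:ℝ) + 1 - ℓ - t = (m:ℝ) + 1 - k := by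
      have h1 : ((m:ℕ):ℝ) = (n:ℝ) - 2*t := by
        rw [hm, Nat.cast_sub ht]; push_cast; ring
      have h2 : ((k:ℕ):ℝ) = (ℓ:ℝ) - t := by
        rw [hk, Nat.cast_sub htℓ]
      rw [h1, h2]; try ring
    have hden : (n:ℝ) + 1 - 2*t = (m:ℝ) + 1 := by
      rw [hm, Nat.cast_sub ht]; push_cast; try ring
    have hCpos : (0:ℝ) < ((m+1).choose k : ℝ) := by exact_mod_cast hC1
    have e1 : ((2^t * m.choose k : ℕ) : ℝ) = (2:ℝ)^t * (m.choose k : ℝ) := by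
      push_cast; ring
    have e2 : ((2^t * (m+1).choose k : ℕ) : ℝ) = (2:ℝ)^t * ((m+1).choose k : ℝ) := by
      push_cast; ring
    have hratio : ((2^t * m.choose k : ℕ) : ℝ) / ((2^t * (m+1).choose k : ℕ) : ℝ)
        = ((n:ℝ) + 1 - ℓ - t) / ((n:ℝ) + 1 - 2*t) := by
      have hd1 : (0:ℝ) < (2:ℝ)^t * ((m+1).choose k : ℝ) := mul_pos h2t hCpos
      have hd2 : (0:ℝ) < (m:ℝ) + 1 := by positivity
      rw [e1, e2, hnum, hden, div_eq_div_iff hd1.ne' hd2.ne']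
      nlinarith [hcast, h2t]
    rw [hratio]
  · intro hA
    unfold tildeV
    rw [hS1, hS0', specV_castSucc_mem a b (by omega) A hA]
    rw [div_sqrt_helper _ ((2^t * m.choose (k-1) : ℕ) : ℝ) ((2^t * (m+1).choose k : ℕ) : ℝ)
      (by positivity) (by positivity)]
    have hch := Nat.add_one_mul_choose_eq m (k-1)
    have hk1' : k - 1 + 1 = k := by omega
    rw [hk1'] at hch
    -- hch : (m+1) * m.choose (k-1) = (m+1).choose k * k
    have hcast : ((m:ℝ) + 1) * (m.choose (k-1) : ℝ) = ((m+1).choose k : ℝ) * (k:ℝ) := by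
      exact_mod_cast hch
    have hnum : (ℓ:ℝ) - t = (k:ℝ) := by
      rw [hk, Nat.cast_sub htℓ]
    have hden : (n:ℝ) + 1 - 2*t = (m:ℝ) + 1 := by
      rw [hm, Nat.cast_sub ht]; push_cast; try ring
    have hCpos : (0:ℝ) < ((m+1).choose k : ℝ) := by exact_mod_cast hC1
    have e1 : ((2^t * m.choose (k-1) : ℕ) : ℝ) = (2:ℝ)^t * (m.choose (k-1) : ℝ) := by
      push_cast; ring
    have e2 : ((2^t * (m+1).choose k : ℕ) : ℝ) = (2:ℝ)^t * ((m+1).choose k : ℝ) := by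
      push_cast; ring
    have hratio : ((2^t * m.choose (k-1) : ℕ) : ℝ) / ((2^t * (m+1).choose k : ℕ) : ℝ)
        = ((ℓ:ℝ) - t) / ((n:ℝ) + 1 - 2*t) := by
      have hd1 : (0:ℝ) < (2:ℝ)^t * ((m+1).choose k : ℝ) := mul_pos h2t hCpos
      have hd2 : (0:ℝ) < (m:ℝ) + 1 := by positivity
      rw [e1, e2, hnum, hden, div_eq_div_iff hd1.ne' hd2.ne']
      nlinarith [hcast, h2t]
    rw [hratio]
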